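/- Let s be an odd prime power, n ≥ 2, and consider the functions f(x) = x₁² + a₁x₁ + h(x₂,...,xₙ) and g(x) = a₂x₁ + c·h(x₂,...,xₙ) on F_sⁿ, where h is a nonzero linear form in x₂,...,xₙ, c ∈ F_s is nonzero, and a₁, a₂ ∈ F_s. Then the pair (f(x), g(x)), as x ranges over F_sⁿ, takes exactly (s+1)s/2 distinct values in F_s²: s of them occurring s^{n−2} times each and s(s−1)/2 of them occurring 2s^{n−2} times each. -/

import Mathlib

open Module

section Aux

variable {F : Type*} [Field F] [Fintype F]

/-- Fibers of a nonzero linear form on `F^m` have cardinality `|F|^(m-1)`. -/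
lemma AKaux_fiberCard {m : ℕ} (h : (Fin m → F) →ₗ[F] F) (hh : h ≠ 0) (t : F) :
    Nat.card {y : Fin m → F // h y = t} = Fintype.card F ^ (m - 1) := by
  classical
  have hsurj : Function.Surjective h := by
    rw [← LinearMap.range_eq_top]
    exact Module.Dual.range_eq_top_of_ne_zero hh
  obtain ⟨y₀, hy₀⟩ := hsurj t
  have e : {y : Fin m → F // h y = t} ≃ LinearMap.ker h :=
  { toFun := fun y => ⟨y.1 - y₀, by simp [LinearMap.mem_ker, map_sub, y.2, hy₀]⟩
    invFun := fun z => ⟨z.1 + y₀, by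
      have hz := z.2
      rw [LinearMap.mem_ker] at hz
      simp [map_add, hz, hy₀]⟩
    left_inv := fun y => by ext : 1; simp
    right_inv := fun z => by ext : 1; simp }
  rw [Nat.card_congr e, Nat.card_eq_fintype_card, card_eq_pow_finrank (K := F)]
  congr 1
  have h1 := Module.Dual.finrank_ker_add_one_of_ne_zero hh
  have h2 : finrank F (Fin m → F) = m := by simp
  omega

omit [Fintype F] in
lemma AKaux_M_zero : Nat.card {z : F // z ^ 2 = (0 : F)} = 1 := by
  classical
  rw [Nat.card_congr (Equiv.subtypeEquivRight (q := fun z : F => z = 0)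
    (fun z => pow_eq_zero_iff two_ne_zero)), Nat.card_eq_fintype_card]
  exact Fintype.card_subtype_eq 0

lemma AKaux_char_ne_two (hodd : Odd (Fintype.card F)) : ringChar F ≠ 2 := by
  intro hch
  have := FiniteField.even_card_of_char_two hch
  obtain ⟨k, hk⟩ := hodd
  omega

lemma AKaux_M_ne_zero (hodd : Odd (Fintype.card F)) {d : F} (hd : d ≠ 0) :
    Nat.card {z : F // z ^ 2 = d} = 0 ∨ Nat.card {z : F // z ^ 2 = d} = 2 := by
  classical
  by_cases hex : ∃ z : F, z ^ 2 = d
  · right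
    obtain ⟨z₀, hz₀⟩ := hex
    have hz₀ne : z₀ ≠ 0 := fun h => hd (by rw [← hz₀, h]; ring)
    have hne : -z₀ ≠ z₀ := fun h =>
      hz₀ne (Ring.eq_self_iff_eq_zero_of_char_ne_two (AKaux_char_ne_two hodd) |>.mp h)
    rw [Nat.card_congr (Equiv.subtypeEquivRight (q := fun z : F => z = z₀ ∨ z = -z₀)
      (fun z => by rw [← hz₀, sq_eq_sq_iff_eq_or_eq_neg])), Nat.card_eq_fintype_card]
    rw [Fintype.card_subtype_or_disjoint _ _
      (by rintro p hp1 hp2 x hx; exact absurd ((hp1 x hx) ▸ hp2 x hx).symm hne)]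
    rw [Fintype.card_subtype_eq, Fintype.card_subtype_eq]
  · left
    rw [Nat.card_eq_zero]
    exact Or.inl ⟨fun z => absurd ⟨z.1, z.2⟩ hex⟩

lemma AKaux_M_sum (hodd : Odd (Fintype.card F)) :
    1 + 2 * Nat.card {d : F // Nat.card {z : F // z ^ 2 = d} = 2} = Fintype.card F := by
  classical
  have key : (Finset.univ : Finset F).card =
      ∑ d : F, (Finset.univ.filter (fun z : F => z ^ 2 = d)).card :=
    Finset.card_eq_sum_card_fiberwise (fun x _ => Finset.mem_univ _)
  have hM : ∀ d : F, (Finset.univ.filter (fun z : F => z ^ 2 = d)).card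
      = Nat.card {z : F // z ^ 2 = d} := by
    intro d; rw [Nat.card_eq_fintype_card, Fintype.card_subtype]
  simp_rw [hM, Finset.card_univ] at key
  rw [← Finset.sum_filter_add_sum_filter_not Finset.univ (fun d : F => d = 0)] at key
  have h0 : (Finset.univ.filter (fun d : F => d = 0)) = {0} := by
    ext x; simp
  rw [h0, Finset.sum_singleton] at key
  have hM0 : Nat.card {z : F // z ^ 2 = (0:F)} = 1 := AKaux_M_zero
  have hsplit : ∑ d ∈ Finset.univ.filter (fun d : F => ¬d = 0), Nat.card {z : F // z ^ 2 = d}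
      = 2 * (Finset.univ.filter (fun d : F => Nat.card {z : F // z ^ 2 = d} = 2)).card := by
    rw [← Finset.sum_filter_add_sum_filter_not _ (fun d : F => Nat.card {z : F // z ^ 2 = d} = 2)]
    have hA : ∑ d ∈ (Finset.univ.filter (fun d : F => ¬d = 0)).filter (fun d => Nat.card {z : F // z ^ 2 = d} = 2), Nat.card {z : F // z ^ 2 = d}
        = 2 * ((Finset.univ.filter (fun d : F => ¬d = 0)).filter (fun d => Nat.card {z : F // z ^ 2 = d} = 2)).card := by
      rw [Finset.sum_congr rfl (fun d hd => (Finset.mem_filter.mp hd).2), Finset.sum_const,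
        smul_eq_mul, mul_comm]
    have hB : ∑ d ∈ (Finset.univ.filter (fun d : F => ¬d = 0)).filter (fun d => ¬Nat.card {z : F // z ^ 2 = d} = 2), Nat.card {z : F // z ^ 2 = d}
        = 0 := by
      refine Finset.sum_eq_zero fun d hd => ?_
      simp only [Finset.mem_filter, Finset.mem_univ, true_and] at hd
      rcases AKaux_M_ne_zero hodd hd.1 with h | h
      · exact h
      · exact absurd h hd.2
    rw [hA, hB, add_zero]
    congr 2
    ext d
    simp only [Finset.mem_filter, Finset.mem_univ, true_and]
    constructor
    · exact fun ⟨_, h2⟩ => h2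
    · intro h2
      refine ⟨fun hd0 => ?_, h2⟩
      rw [hd0] at h2; rw [hM0] at h2; omega
  rw [hsplit] at key
  rw [show Nat.card {z : F // z ^ 2 = (0:F)} = 1 from AKaux_M_zero] at key
  have hfin : Nat.card {d : F // Nat.card {z : F // z ^ 2 = d} = 2} = (Finset.univ.filter (fun d : F => Nat.card {z : F // z ^ 2 = d} = 2)).card := by
    rw [Nat.card_eq_fintype_card, Fintype.card_subtype]
  rw [hfin]
  omega

omit [Fintype F] in
lemma AKaux_cond_iff (c a₁ a₂ u v a t : F) (hc : c ≠ 0) (h2F : (2:F) ≠ 0) :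
    (a^2 + a₁*a + t = u ∧ a₂*a + c*t = v) ↔
    ((a + (a₁ - a₂/c)/2)^2 = ((a₁ - a₂/c)/2)^2 - (v/c - u) ∧ t = (v - a₂*a)/c) := by
  have hid : (a + (a₁ - a₂/c)/2)^2 - (((a₁ - a₂/c)/2)^2 - (v/c - u))
      = (a^2 + a₁*a + (v - a₂*a)/c) - u := by
    field_simp
    ring
  have hQP : ((a + (a₁ - a₂/c)/2)^2 = ((a₁ - a₂/c)/2)^2 - (v/c - u))
      ↔ (a^2 + a₁*a + (v - a₂*a)/c = u) := by
    rw [← sub_eq_zero, hid, sub_eq_zero]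
  constructor
  · rintro ⟨h1, h2⟩
    have ht : t = (v - a₂*a)/c := by field_simp; linear_combination h2
    exact ⟨hQP.mpr (ht ▸ h1), ht⟩
  · rintro ⟨h1, ht⟩
    refine ⟨by rw [ht]; exact hQP.mp h1, by rw [ht]; field_simp; ring⟩

lemma AKaux_cnt_formula {m : ℕ} (h : (Fin m → F) →ₗ[F] F) (hh : h ≠ 0)
    (c a₁ a₂ : F) (hc : c ≠ 0) (h2F : (2:F) ≠ 0) (u v : F) :
    Nat.card {x : F × (Fin m → F) // (x.1^2 + a₁*x.1 + h x.2, a₂*x.1 + c*h x.2) = (u, v)}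
    = Nat.card {z : F // z^2 = ((a₁ - a₂/c)/2)^2 - (v/c - u)} * Fintype.card F ^ (m - 1) := by
  classical
  set β := (a₁ - a₂/c)/2 with hβ
  set D := β^2 - (v/c - u) with hD
  have e1 : {x : F × (Fin m → F) // (x.1^2 + a₁*x.1 + h x.2, a₂*x.1 + c*h x.2) = (u, v)}
      ≃ {x : F × (Fin m → F) // ((x.1 + β)^2 = D ∧ h x.2 = (v - a₂*x.1)/c)} :=
    Equiv.subtypeEquivRight (fun x => by
      rw [Prod.mk.injEq]
      exact AKaux_cond_iff c a₁ a₂ u v x.1 (h x.2) hc h2F)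
  rw [Nat.card_congr e1,
    Nat.card_congr (Equiv.subtypeProdEquivSigmaSubtype
      (fun (a : F) (y : Fin m → F) => (a + β)^2 = D ∧ h y = (v - a₂*a)/c)),
    Nat.card_eq_fintype_card, Fintype.card_sigma]
  have hsummand : ∀ a : F,
      Fintype.card {y : Fin m → F // (a + β)^2 = D ∧ h y = (v - a₂*a)/c}
      = if (a + β)^2 = D then Fintype.card F ^ (m-1) else 0 := by
    intro a
    by_cases hq : (a + β)^2 = D
    · rw [if_pos hq, ← Nat.card_eq_fintype_card,
        Nat.card_congr (Equiv.subtypeEquivRight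
          (q := fun y : Fin m → F => h y = (v - a₂*a)/c) (fun y => by simp [hq]))]
      exact AKaux_fiberCard h hh _
    · rw [if_neg hq, Fintype.card_eq_zero_iff]
      exact ⟨fun y => hq y.2.1⟩
  simp_rw [hsummand]
  rw [Finset.sum_ite, Finset.sum_const, Finset.sum_const_zero, add_zero, smul_eq_mul]
  congr 1
  rw [← Fintype.card_subtype, ← Nat.card_eq_fintype_card]
  exact Nat.card_congr (Equiv.subtypeEquiv (Equiv.addRight β) (fun a => Iff.rfl))

end Aux

/-- Lemma 11(ii), `s` odd: the pair `(x₁² + a₁x₁ + h, a₂x₁ + c·h)` takes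
`(s+1)s/2` distinct values, `s` of them `s^{n−2}` times each and `s(s−1)/2` of
them `2s^{n−2}` times each. -/
theorem semi_orthogonal_quadratic_linear
    {F : Type*} [Field F] [Fintype F] (hodd : Odd (Fintype.card F))
    {n : ℕ} (hn : 2 ≤ n)
    (h : (Fin (n - 1) → F) →ₗ[F] F) (hh : h ≠ 0)
    (c a₁ a₂ : F) (hc : c ≠ 0) :
    let s := Fintype.card F
    let f : F × (Fin (n - 1) → F) → F := fun x => x.1 ^ 2 + a₁ * x.1 + h x.2
    let g : F × (Fin (n - 1) → F) → F := fun x => a₂ * x.1 + c * h x.2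
    let cnt : F × F → ℕ := fun p => Nat.card {x // (f x, g x) = p}
    (∀ p, cnt p = 0 ∨ cnt p = s ^ (n - 2) ∨ cnt p = 2 * s ^ (n - 2)) ∧
    Nat.card {p : F × F // cnt p = s ^ (n - 2)} = s ∧
    Nat.card {p : F × F // cnt p = 2 * s ^ (n - 2)} = s * (s - 1) / 2 ∧
    Nat.card {p : F × F // cnt p ≠ 0} = (s + 1) * s / 2 := by
  classical
  intro s f g cnt
  have h2F : (2:F) ≠ 0 := Ring.two_ne_zero (AKaux_char_ne_two hodd)
  have hspos : 0 < s := Fintype.card_pos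
  have hEpos : 0 < s ^ (n - 2) := pow_pos hspos _
  set E := s ^ (n - 2) with hE
  set M : F → ℕ := fun d => Nat.card {z : F // z ^ 2 = d} with hM
  set β := (a₁ - a₂/c)/2 with hβ
  set Df : F × F → F := fun p => β^2 - (p.2/c - p.1) with hDf
  -- the count formula
  have hcnt : ∀ p : F × F, cnt p = M (Df p) * E := by
    intro p
    have := AKaux_cnt_formula h hh c a₁ a₂ hc h2F p.1 p.2
    have hm : n - 1 - 1 = n - 2 := by omega
    rw [hm] at this
    simpa [cnt, f, g, M, Df, β] using this
  -- facts about M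
  have hM0 : Nat.card {z : F // z ^ 2 = (0:F)} = 1 := AKaux_M_zero
  have hM1 : ∀ d : F, M d = 1 ↔ d = 0 := by
    intro d
    constructor
    · intro h1
      by_contra hd
      rcases AKaux_M_ne_zero hodd hd with h' | h'
      · have h'' : M d = 0 := h'
        omega
      · have h'' : M d = 2 := h'
        omega
    · intro hd; rw [hd]; exact hM0
  have hMtri : ∀ d : F, M d = 0 ∨ M d = 1 ∨ M d = 2 := by
    intro d
    by_cases hd : d = 0
    · right; left; exact (hM1 d).mpr hd
    · rcases AKaux_M_ne_zero hodd hd with h' | h'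
      · left; exact h'
      · right; right; exact h'
  have hM2card : Nat.card {d : F // M d = 2} = (s - 1) / 2 := by
    have h1 := AKaux_M_sum (F := F) hodd
    have h2 : Nat.card {d : F // M d = 2}
        = Nat.card {d : F // Nat.card {z : F // z ^ 2 = d} = 2} := rfl
    have hs : s = Fintype.card F := rfl
    omega
  obtain ⟨k, hk⟩ := hodd
  have hks : s = 2 * k + 1 := hk
  -- the equivalence p ↦ (Df p, p.2)
  have hgen : ∀ P : F → Prop, Nat.card {p : F × F // P (Df p)} = Nat.card {d : F // P d} * s := by
    intro P
    have e2 : {p : F × F // P (Df p)} ≃ {q : F × F // P q.1} :=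
      Equiv.subtypeEquiv
        ⟨fun p => (Df p, p.2), fun q => (q.1 - β^2 + q.2/c, q.2),
         fun p => by simp only [hDf]; ext <;> simp <;> ring,
         fun q => by simp only [hDf]; ext <;> simp <;> ring⟩
        (fun p => Iff.rfl)
    rw [Nat.card_congr e2, Nat.card_congr (Equiv.prodSubtypeFstEquivSubtypeProd), Nat.card_prod,
      Nat.card_eq_fintype_card (α := F)]
  -- counting the value sets
  have count1 : Nat.card {p : F × F // cnt p = E} = s := by
    have hiff : ∀ p : F × F, (cnt p = E) ↔ M (Df p) = 1 := by
      intro p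
      rw [hcnt p]
      constructor
      · intro hp
        have : M (Df p) * E = 1 * E := by rw [one_mul]; exact hp
        exact Nat.eq_of_mul_eq_mul_right hEpos this
      · intro hp; rw [hp, one_mul]
    rw [Nat.card_congr (Equiv.subtypeEquivRight hiff), hgen (fun d => M d = 1)]
    have : Nat.card {d : F // M d = 1} = 1 := by
      rw [Nat.card_congr (Equiv.subtypeEquivRight hM1), Nat.card_eq_fintype_card]
      exact Fintype.card_subtype_eq 0
    rw [this, one_mul]
  have count2 : Nat.card {p : F × F // cnt p = 2 * E} = s * (s - 1) / 2 := by
    have hiff : ∀ p : F × F, (cnt p = 2 * E) ↔ M (Df p) = 2 := by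
      intro p
      rw [hcnt p]
      exact ⟨fun hp => Nat.eq_of_mul_eq_mul_right hEpos hp, fun hp => by rw [hp]⟩
    rw [Nat.card_congr (Equiv.subtypeEquivRight hiff), hgen (fun d => M d = 2), hM2card]
    have hdvd : 2 ∣ s - 1 := by omega
    rw [Nat.mul_div_assoc s hdvd, mul_comm]
  have count3 : Nat.card {p : F × F // cnt p ≠ 0} = (s + 1) * s / 2 := by
    have hiff : ∀ p : F × F, (cnt p ≠ 0) ↔ (M (Df p) = 1 ∨ M (Df p) = 2) := by
      intro p
      rw [hcnt p]
      constructor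
      · intro hp
        rcases hMtri (Df p) with h' | h' | h'
        · exact absurd (by rw [h', zero_mul]) hp
        · exact Or.inl h'
        · exact Or.inr h'
      · rintro (h' | h') <;> rw [h'] <;> positivity
    rw [Nat.card_congr (Equiv.subtypeEquivRight hiff),
      hgen (fun d => M d = 1 ∨ M d = 2)]
    have hdisj : Nat.card {d : F // M d = 1 ∨ M d = 2} = 1 + (s - 1) / 2 := by
      rw [Nat.card_eq_fintype_card,
        Fintype.card_subtype_or_disjoint _ _
          (by rintro p hp1 hp2 x hx
              have h1 : M x = 1 := hp1 x hx
              have h2 : M x = 2 := hp2 x hx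
              omega)]
      congr 1
      · rw [← Nat.card_eq_fintype_card, Nat.card_congr (Equiv.subtypeEquivRight hM1),
          Nat.card_eq_fintype_card]
        exact Fintype.card_subtype_eq 0
      · rw [← Nat.card_eq_fintype_card]
        exact hM2card
    rw [hdisj]
    have h1 : (s + 1) / 2 = 1 + (s - 1) / 2 := by omega
    have hdvd : 2 ∣ s + 1 := by omega
    rw [mul_comm (s+1) s, Nat.mul_div_assoc s hdvd, h1, mul_comm]
  refine ⟨?_, count1, count2, count3⟩
  intro p
  rw [hcnt p]
  rcases hMtri (Df p) with h' | h' | h' <;> rw [h']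
  · left; rw [zero_mul]
  · right; left; rw [one_mul]
  · right; right; rfl
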